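/- arXiv:1401.1170 — 3 statements merged into one kernel-verified Lean document; each statement's English description precedes it below -/
import Mathlib

section
/- The function h(v) = I_0(1/2 + √v) defined for v ∈ (0, 1/4) is strictly convex; equivalently, viewed as a function of (u - 1/2)^2, the rate function I_0(u) is convex. -/
noncomputable def I0 (u : ℝ) : ℝ := (1/2) * (u * Real.log u + (1-u) * Real.log (1-u))

section aux

/-- Key inequality: `log((1/2+s)/(1/2-s)) < s/((1/2+s)(1/2-s))` for `0 < s < 1/2`. -/
lemma I0_key_ineq {s : ℝ} (h0 : 0 < s) (h1 : s < 1/2) :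
    Real.log (1/2 + s) - Real.log (1/2 - s) < s / ((1/2 + s) * (1/2 - s)) := by
  have ha : (0:ℝ) < 1/2 + s := by linarith
  have hb : (0:ℝ) < 1/2 - s := by linarith
  have hne1 : (1:ℝ) - 2*s ≠ 0 := by intro h; nlinarith
  have hne2 : (1:ℝ) + 2*s ≠ 0 := by positivity
  have hne3 : (1:ℝ) - 4*s^2 ≠ 0 := by intro h; nlinarith
  set y : ℝ := (1/2 + s) / (1/2 - s) with hy
  have hy0 : 0 < y := div_pos ha hb
  have hy1 : 1 < y := (one_lt_div hb).mpr (by linarith)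
  have hlog : Real.log (1/2 + s) - Real.log (1/2 - s) = Real.log y := by
    rw [hy, Real.log_div ha.ne' hb.ne']
  have hxpos : 0 < Real.log y := Real.log_pos hy1
  have hsinh : Real.log y < Real.sinh (Real.log y) := Real.self_lt_sinh_iff.mpr hxpos
  have hsl : Real.sinh (Real.log y) = (y - y⁻¹) / 2 := Real.sinh_log hy0
  have hval : (y - y⁻¹) / 2 = s / ((1/2 + s) * (1/2 - s)) := by
    rw [hy]
    rw [inv_div]
    field_simp [hne1, hne2, hne3]
    ring
  rw [hlog]
  rw [hsl, hval] at hsinh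
  exact hsinh

/-- First derivative of `v ↦ I0 (1/2 + √v)`. -/
lemma I0_hasDerivAt_first {v : ℝ} (hv : v ∈ Set.Ioo (0:ℝ) (1/4)) :
    HasDerivAt (fun v => I0 (1/2 + Real.sqrt v))
      ((Real.log (1/2 + Real.sqrt v) - Real.log (1/2 - Real.sqrt v)) / (4 * Real.sqrt v)) v := by
  obtain ⟨hv0, hv4⟩ := hv
  have hs0 : 0 < Real.sqrt v := Real.sqrt_pos.mpr hv0
  have hs2 : Real.sqrt v < 1/2 := (Real.sqrt_lt' (by norm_num)).mpr (by nlinarith)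
  set s := Real.sqrt v with hs
  have ha : (0:ℝ) < 1/2 + s := by linarith
  have hb : (0:ℝ) < 1/2 - s := by linarith
  have hne1 : (1:ℝ) - 2*s ≠ 0 := by intro h; nlinarith
  have hne2 : (1:ℝ) + 2*s ≠ 0 := by positivity
  have hne3 : (1:ℝ) - 4*s^2 ≠ 0 := by intro h; nlinarith
  have hsq : HasDerivAt Real.sqrt (1/(2*s)) v := Real.hasDerivAt_sqrt hv0.ne'
  have hu : HasDerivAt (fun w => 1/2 + Real.sqrt w) (1/(2*s)) v := hsq.const_add (1/2)
  have hw : HasDerivAt (fun w => 1/2 - Real.sqrt w) (-(1/(2*s))) v := hsq.const_sub (1/2)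
  have hla : HasDerivAt (fun w => Real.log (1/2 + Real.sqrt w)) ((1/(2*s)) / (1/2 + s)) v :=
    hu.log ha.ne'
  have hlb : HasDerivAt (fun w => Real.log (1/2 - Real.sqrt w)) ((-(1/(2*s))) / (1/2 - s)) v :=
    hw.log hb.ne'
  have h1 : HasDerivAt (fun w => (1/2 + Real.sqrt w) * Real.log (1/2 + Real.sqrt w))
      ((1/(2*s)) * Real.log (1/2 + s) + (1/2 + s) * ((1/(2*s)) / (1/2 + s))) v := hu.mul hla
  have h2 : HasDerivAt (fun w => (1/2 - Real.sqrt w) * Real.log (1/2 - Real.sqrt w))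
      ((-(1/(2*s))) * Real.log (1/2 - s) + (1/2 - s) * ((-(1/(2*s))) / (1/2 - s))) v := hw.mul hlb
  have H := ((h1.add h2).const_mul (1/2 : ℝ))
  have hfun : (fun v => I0 (1/2 + Real.sqrt v)) =
      (fun w => (1/2 : ℝ) * ((1/2 + Real.sqrt w) * Real.log (1/2 + Real.sqrt w) +
        (1/2 - Real.sqrt w) * Real.log (1/2 - Real.sqrt w))) := by
    funext w
    have h : (1:ℝ) - (1/2 + Real.sqrt w) = 1/2 - Real.sqrt w := by ring
    rw [I0, h]
  rw [hfun]
  refine H.congr_deriv ?_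
  field_simp [hs0.ne', hne1, hne2, hne3]
  ring

/-- Second derivative of `v ↦ I0 (1/2 + √v)`. -/
lemma I0_hasDerivAt_second {v : ℝ} (hv : v ∈ Set.Ioo (0:ℝ) (1/4)) :
    HasDerivAt
      (fun w => (Real.log (1/2 + Real.sqrt w) - Real.log (1/2 - Real.sqrt w)) / (4 * Real.sqrt w))
      ((Real.sqrt v / ((1/2 + Real.sqrt v) * (1/2 - Real.sqrt v))
        - (Real.log (1/2 + Real.sqrt v) - Real.log (1/2 - Real.sqrt v))) / (8 * Real.sqrt v ^ 3))
      v := by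
  obtain ⟨hv0, hv4⟩ := hv
  have hs0 : 0 < Real.sqrt v := Real.sqrt_pos.mpr hv0
  have hs2 : Real.sqrt v < 1/2 := (Real.sqrt_lt' (by norm_num)).mpr (by nlinarith)
  set s := Real.sqrt v with hs
  have ha : (0:ℝ) < 1/2 + s := by linarith
  have hb : (0:ℝ) < 1/2 - s := by linarith
  have hne1 : (1:ℝ) - 2*s ≠ 0 := by intro h; nlinarith
  have hne2 : (1:ℝ) + 2*s ≠ 0 := by positivity
  have hne3 : (1:ℝ) - 4*s^2 ≠ 0 := by intro h; nlinarith
  have hsq : HasDerivAt Real.sqrt (1/(2*s)) v := Real.hasDerivAt_sqrt hv0.ne'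
  have hu : HasDerivAt (fun w => 1/2 + Real.sqrt w) (1/(2*s)) v := hsq.const_add (1/2)
  have hw : HasDerivAt (fun w => 1/2 - Real.sqrt w) (-(1/(2*s))) v := hsq.const_sub (1/2)
  have hla : HasDerivAt (fun w => Real.log (1/2 + Real.sqrt w)) ((1/(2*s)) / (1/2 + s)) v :=
    hu.log ha.ne'
  have hlb : HasDerivAt (fun w => Real.log (1/2 - Real.sqrt w)) ((-(1/(2*s))) / (1/2 - s)) v :=
    hw.log hb.ne'
  have hc : HasDerivAt (fun w => Real.log (1/2 + Real.sqrt w) - Real.log (1/2 - Real.sqrt w))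
      ((1/(2*s)) / (1/2 + s) - (-(1/(2*s))) / (1/2 - s)) v := hla.sub hlb
  have hd : HasDerivAt (fun w => 4 * Real.sqrt w) (4 * (1/(2*s))) v := hsq.const_mul 4
  have hdne : 4 * Real.sqrt v ≠ 0 := by positivity
  have H := hc.div hd hdne
  refine H.congr_deriv ?_
  rw [← hs]
  field_simp [hs0.ne', hne1, hne2, hne3]
  ring

end aux

/-- As a function of v = (u-1/2)^2, the rate function is strictly convex:
    h(v) = I_0(1/2 + √v) is strictly convex on (0,1/4). -/
theorem I0_convex_in_square :
    StrictConvexOn ℝ (Set.Ioo (0:ℝ) (1/4)) (fun v => I0 (1/2 + Real.sqrt v)) := by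
  apply strictConvexOn_of_deriv2_pos (convex_Ioo _ _)
  · intro v hv
    exact (I0_hasDerivAt_first hv).differentiableAt.continuousAt.continuousWithinAt
  · intro v hv
    rw [interior_Ioo] at hv
    have hv0 : 0 < v := hv.1
    have hv4 : v < 1/4 := hv.2
    have hs0 : 0 < Real.sqrt v := Real.sqrt_pos.mpr hv0
    have hs2 : Real.sqrt v < 1/2 := (Real.sqrt_lt' (by norm_num)).mpr (by nlinarith)
    have hEq : Set.EqOn (deriv (fun v => I0 (1/2 + Real.sqrt v)))
        (fun w => (Real.log (1/2 + Real.sqrt w) - Real.log (1/2 - Real.sqrt w)) / (4 * Real.sqrt w))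
        (Set.Ioo (0:ℝ) (1/4)) := fun w hw => (I0_hasDerivAt_first hw).deriv
    have hmem : Set.Ioo (0:ℝ) (1/4) ∈ nhds v := Ioo_mem_nhds hv0 hv4
    have h2 : (deriv^[2] (fun v => I0 (1/2 + Real.sqrt v))) v
        = deriv (fun w => (Real.log (1/2 + Real.sqrt w) - Real.log (1/2 - Real.sqrt w))
            / (4 * Real.sqrt w)) v := by
      show deriv (deriv (fun v => I0 (1/2 + Real.sqrt v))) v = _
      exact Filter.EventuallyEq.deriv_eq (hEq.eventuallyEq_of_mem hmem)
    rw [h2, (I0_hasDerivAt_second hv).deriv]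
    apply div_pos
    · have := I0_key_ineq hs0 hs2
      linarith
    · positivity
end

section
/- Among all measurable functions g : [0,1]² → [0,1] with ∫∫ (g(x,y) - 1/2)² dx dy = K fixed (0 < K < 1/4), the minimum of ∫∫ I_0(g(x,y)) dx dy is attained by functions with |g(x,y) - 1/2| constant equal to √K almost everywhere; in particular I(g) ≥ I_0(1/2 + √K) for all admissible g. -/
noncomputable def rateFn (g : ℝ → ℝ → ℝ) : ℝ :=
  ∫ x in (0:ℝ)..1, ∫ y in (0:ℝ)..1, I0 (g x y)

noncomputable def Lfn (t : ℝ) : ℝ := Real.log (1/2 + t) - Real.log (1/2 - t)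

lemma I0_symm (u : ℝ) : I0 (1 - u) = I0 u := by
  unfold I0; ring_nf

lemma hasDerivAt_I0half {t : ℝ} (h1 : -(1/2) < t) (h2 : t < 1/2) :
    HasDerivAt (fun t => I0 (1/2 + t)) (Lfn t / 2) t := by
  have hp : (0:ℝ) < 1/2 + t := by linarith
  have hm : (0:ℝ) < 1/2 - t := by linarith
  have ip : HasDerivAt (fun t : ℝ => 1/2 + t) 1 t := by
    simpa using (hasDerivAt_id t).const_add (1/2 : ℝ)
  have im : HasDerivAt (fun t : ℝ => 1/2 - t) (-1) t := by
    simpa using (hasDerivAt_id' t).const_sub (1/2:ℝ)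
  have d1 : HasDerivAt (fun t : ℝ => (1/2 + t) * Real.log (1/2 + t))
      (Real.log (1/2 + t) + 1) t := by
    have := (Real.hasDerivAt_mul_log hp.ne').comp t ip
    simpa [Function.comp_def] using this
  have d2 : HasDerivAt (fun t : ℝ => (1/2 - t) * Real.log (1/2 - t))
      (-(Real.log (1/2 - t) + 1)) t := by
    have := (Real.hasDerivAt_mul_log hm.ne').comp t im
    exact this.congr_deriv (by ring)
  have h := (d1.add d2).const_mul (1/2 : ℝ)
  have : HasDerivAt (fun t => I0 (1/2 + t))
      ((1/2) * ((Real.log (1/2 + t) + 1) + -(Real.log (1/2 - t) + 1))) t := by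
    exact h.congr_of_eventuallyEq (Filter.Eventually.of_forall fun t => by simp only [Pi.add_apply]; unfold I0; ring_nf)
  convert this using 1
  unfold Lfn; ring

lemma hasDerivAt_Lfn {y : ℝ} (hy1 : -(1/2) < y) (hy2 : y < 1/2) :
    HasDerivAt Lfn (1/(1/2 + y) + 1/(1/2 - y)) y := by
  have hp : (0:ℝ) < 1/2 + y := by linarith
  have hq : (0:ℝ) < 1/2 - y := by linarith
  have ip : HasDerivAt (fun t : ℝ => 1/2 + t) 1 y := by
    simpa using (hasDerivAt_id y).const_add (1/2 : ℝ)
  have im : HasDerivAt (fun t : ℝ => 1/2 - t) (-1) y := by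
    simpa using (hasDerivAt_id' y).const_sub (1/2:ℝ)
  have e1 : HasDerivAt (fun y : ℝ => Real.log (1/2 + y)) (1/(1/2+y)) y := by
    have := (Real.hasDerivAt_log hp.ne').comp y ip
    simpa [one_div, Function.comp_def] using this
  have e2 : HasDerivAt (fun y : ℝ => Real.log (1/2 - y)) (-(1/(1/2-y))) y := by
    have := (Real.hasDerivAt_log hq.ne').comp y im
    exact this.congr_deriv (by simp)
  have h := e1.sub e2
  show HasDerivAt (fun t => Real.log (1/2 + t) - Real.log (1/2 - t)) _ y
  exact h.congr_deriv (by ring)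

lemma Lfn_cross {a b : ℝ} (ha : 0 < a) (hab : a < b) (hb : b < 1/2) :
    b * Lfn a < a * Lfn b := by
  have hb0 : 0 < b := ha.trans hab
  set m : ℝ → ℝ := fun x => a * Lfn (b * x) - b * Lfn (a * x) with hm
  have hd : ∀ x ∈ Set.Icc (0:ℝ) 1, HasDerivAt m
      (a * ((1/(1/2 + b*x) + 1/(1/2 - b*x)) * b) - b * ((1/(1/2 + a*x) + 1/(1/2 - a*x)) * a)) x := by
    intro x hx
    have hbx1 : b * x < 1/2 := lt_of_le_of_lt (by nlinarith [hx.1, hx.2]) hb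
    have hax1 : a * x < 1/2 := lt_of_le_of_lt (by nlinarith [hx.1, hx.2, hab]) hb
    have hbx0 : 0 ≤ b * x := mul_nonneg hb0.le hx.1
    have hax0 : 0 ≤ a * x := mul_nonneg ha.le hx.1
    have ib : HasDerivAt (fun x : ℝ => b * x) b x := by
      simpa using (hasDerivAt_id x).const_mul b
    have ia : HasDerivAt (fun x : ℝ => a * x) a x := by
      simpa using (hasDerivAt_id x).const_mul a
    have c1 : HasDerivAt (fun x => Lfn (b * x)) ((1/(1/2 + b*x) + 1/(1/2 - b*x)) * b) x :=
      (hasDerivAt_Lfn (by linarith) hbx1).comp x ib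
    have c2 : HasDerivAt (fun x => Lfn (a * x)) ((1/(1/2 + a*x) + 1/(1/2 - a*x)) * a) x :=
      (hasDerivAt_Lfn (by linarith) hax1).comp x ia
    exact (c1.const_mul a).sub (c2.const_mul b)
  have hmono : StrictMonoOn m (Set.Icc (0:ℝ) 1) := by
    apply strictMonoOn_of_deriv_pos (convex_Icc 0 1)
      (fun x hx => (hd x hx).continuousAt.continuousWithinAt)
    intro x hx
    rw [interior_Icc] at hx
    have hx' : x ∈ Set.Icc (0:ℝ) 1 := ⟨hx.1.le, hx.2.le⟩
    rw [(hd x hx').deriv]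
    have hbx1 : b * x < 1/2 := by nlinarith [hx.1, hx.2]
    have hax : a * x < b * x := by nlinarith [hx.1]
    have hax0 : 0 < a * x := mul_pos ha hx.1
    have k1 : (0:ℝ) < 1/2 + a*x := by linarith
    have k2 : (0:ℝ) < 1/2 - a*x := by linarith
    have k3 : (0:ℝ) < 1/2 + b*x := by linarith
    have k4 : (0:ℝ) < 1/2 - b*x := by linarith
    have key : 1/(1/2 + a*x) + 1/(1/2 - a*x) < 1/(1/2 + b*x) + 1/(1/2 - b*x) := by
      rw [div_add_div _ _ k1.ne' k2.ne', div_add_div _ _ k3.ne' k4.ne']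
      rw [div_lt_div_iff₀ (by nlinarith) (by nlinarith)]
      nlinarith
    nlinarith [mul_pos ha hb0]
  have h0 : m 0 = 0 := by simp [hm, Lfn]
  have h1 := hmono (Set.mem_Icc.2 ⟨le_refl 0, zero_le_one⟩)
    (Set.mem_Icc.2 ⟨zero_le_one, le_refl 1⟩) zero_lt_one
  rw [h0] at h1
  simp only [hm, mul_one] at h1
  linarith


lemma continuous_I0 : Continuous I0 := by
  unfold I0
  exact continuous_const.mul (Real.continuous_mul_log.add
    (Real.continuous_mul_log.comp (continuous_const.sub continuous_id)))

lemma F_min {s : ℝ} (hs0 : 0 < s) (hs1 : s < 1/2) :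
    ∀ t ∈ Set.Icc (0:ℝ) (1/2),
      I0 (1/2 + s) - (Lfn s / (4*s)) * s^2 ≤ I0 (1/2 + t) - (Lfn s / (4*s)) * t^2 := by
  set c : ℝ := Lfn s / (4*s) with hc
  set F : ℝ → ℝ := fun t => I0 (1/2 + t) - c * t^2 with hF
  have hcont : Continuous F := by
    apply Continuous.sub (continuous_I0.comp (by continuity))
    continuity
  have hd : ∀ t ∈ Set.Ioo (-(1/2):ℝ) (1/2), HasDerivAt F (Lfn t / 2 - c * (2*t)) t := by
    intro t ht
    have h2 : HasDerivAt (fun t : ℝ => c * t^2) (c * (2*t)) t := by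
      have := (hasDerivAt_pow 2 t).const_mul c
      exact this.congr_deriv (by ring)
    exact (hasDerivAt_I0half ht.1 ht.2).sub h2
  have hanti : StrictAntiOn F (Set.Icc 0 s) := by
    apply strictAntiOn_of_deriv_neg (convex_Icc 0 s) (hcont.continuousOn)
    intro t ht
    rw [interior_Icc] at ht
    have ht0 : 0 < t := ht.1
    have hts : t < s := ht.2
    rw [(hd t ⟨by linarith, by linarith⟩).deriv]
    have hcr := Lfn_cross ht0 hts hs1
    rw [hc]
    have : Lfn t / 2 - Lfn s / (4*s) * (2*t) = (s * Lfn t - t * Lfn s) / (2*s) := by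
      field_simp; ring
    rw [this]
    apply div_neg_of_neg_of_pos (by linarith) (by linarith)
  have hmono : StrictMonoOn F (Set.Icc s (1/2)) := by
    apply strictMonoOn_of_deriv_pos (convex_Icc s (1/2)) (hcont.continuousOn)
    intro t ht
    rw [interior_Icc] at ht
    have hts : s < t := ht.1
    have ht1 : t < 1/2 := ht.2
    rw [(hd t ⟨by linarith, by linarith⟩).deriv]
    have hcr := Lfn_cross hs0 hts ht1
    rw [hc]
    have : Lfn t / 2 - Lfn s / (4*s) * (2*t) = (s * Lfn t - t * Lfn s) / (2*s) := by
      field_simp; ring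
    rw [this]
    apply div_pos (by linarith) (by linarith)
  intro t ht
  rcases lt_trichotomy t s with h | h | h
  · exact (hanti ⟨ht.1, h.le⟩ ⟨ht.1.trans (le_of_lt (lt_of_lt_of_le h (le_refl s))), le_refl s⟩ h).le
  · rw [h]
  · exact (hmono ⟨le_refl s, hs1.le⟩ ⟨h.le, ht.2⟩ h).le

lemma I0_key {s : ℝ} (hs0 : 0 < s) (hs1 : s < 1/2) {u : ℝ} (hu : u ∈ Set.Icc (0:ℝ) 1) :
    I0 (1/2 + s) + (Lfn s / (4*s)) * ((u - 1/2)^2 - s^2) ≤ I0 u := by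
  set t : ℝ := |u - 1/2| with htdef
  have ht : t ∈ Set.Icc (0:ℝ) (1/2) := by
    constructor
    · exact abs_nonneg _
    · rw [abs_le]; constructor <;> [linarith [hu.1]; linarith [hu.2]]
  have hsq : (u - 1/2)^2 = t^2 := (sq_abs _).symm
  have hI : I0 u = I0 (1/2 + t) := by
    rcases le_or_gt (1/2) u with h | h
    · rw [htdef, abs_of_nonneg (by linarith)]; norm_num
    · rw [htdef, abs_of_neg (by linarith)]
      have : (1/2 : ℝ) + -(u - 1/2) = 1 - u := by ring
      rw [this, I0_symm]
  have := F_min hs0 hs1 t ht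
  rw [hI, hsq]
  linarith

open MeasureTheory intervalIntegral

lemma intervalIntegrable_of_bdd {f : ℝ → ℝ} (hf : Measurable f) (hb : ∀ y, |f y| ≤ 1) :
    IntervalIntegrable f volume 0 1 := by
  rw [intervalIntegrable_iff]
  have hc : IntegrableOn (fun _ : ℝ => (1:ℝ)) (Set.uIoc (0:ℝ) 1) volume := by
    refine integrableOn_const (by simp [Set.uIoc_of_le zero_le_one])
  exact hc.mono' hf.aestronglyMeasurable.restrict (ae_of_all _ fun y => by simpa using hb y)

lemma measurable_param {f : ℝ × ℝ → ℝ} (hf : Measurable f) :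
    Measurable fun x => ∫ y in (0:ℝ)..1, f (x, y) := by
  simp_rw [intervalIntegral.integral_of_le (zero_le_one)]
  exact (hf.stronglyMeasurable.integral_prod_right').measurable

lemma mul_log_bounds (x : ℝ) (h0 : 0 ≤ x) (h1 : x ≤ 1) :
    -1 ≤ x * Real.log x ∧ x * Real.log x ≤ 0 := by
  rcases eq_or_lt_of_le h0 with h | h
  · simp [← h]
  constructor
  · have hlog : Real.log x⁻¹ ≤ x⁻¹ - 1 := Real.log_le_sub_one_of_pos (by positivity)
    rw [Real.log_inv] at hlog
    have : x - 1 ≤ x * Real.log x := by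
      have := mul_le_mul_of_nonneg_left hlog h0
      have hxx : x * x⁻¹ = 1 := mul_inv_cancel₀ h.ne'
      nlinarith
    linarith
  · exact mul_nonpos_of_nonneg_of_nonpos h0 (Real.log_nonpos h0 h1)

lemma abs_I0_le {u : ℝ} (hu : u ∈ Set.Icc (0:ℝ) 1) : |I0 u| ≤ 1 := by
  obtain ⟨hA1, hA2⟩ := mul_log_bounds u hu.1 hu.2
  obtain ⟨hB1, hB2⟩ := mul_log_bounds (1-u) (by linarith [hu.2]) (by linarith [hu.1])
  rw [I0, abs_le]; constructor <;> nlinarith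

/-- Among measurable g : [0,1]² → [0,1] with ∫∫ (g - 1/2)² = K fixed, the rate function
    is minimized exactly by functions with |g - 1/2| ≡ √K: every admissible g satisfies
    I(g) ≥ I_0(1/2 + √K), and any admissible g with |g - 1/2| = √K attains this value. -/
theorem rate_function_two_values_optimal (K : ℝ) (hK : K ∈ Set.Ioo (0:ℝ) (1/4)) :
    (∀ g : ℝ → ℝ → ℝ, (Measurable fun q : ℝ × ℝ => g q.1 q.2) →
      (∀ x y, g x y ∈ Set.Icc (0:ℝ) 1) →
      (∫ x in (0:ℝ)..1, ∫ y in (0:ℝ)..1, (g x y - 1/2) ^ 2) = K →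
      I0 (1/2 + Real.sqrt K) ≤ rateFn g) ∧
    (∀ g : ℝ → ℝ → ℝ, (Measurable fun q : ℝ × ℝ => g q.1 q.2) →
      (∀ x y, g x y ∈ Set.Icc (0:ℝ) 1) →
      (∫ x in (0:ℝ)..1, ∫ y in (0:ℝ)..1, (g x y - 1/2) ^ 2) = K →
      (∀ x y, |g x y - 1/2| = Real.sqrt K) →
      rateFn g = I0 (1/2 + Real.sqrt K)) := by
  obtain ⟨hK0, hK4⟩ := hK
  set s : ℝ := Real.sqrt K with hsdef
  have hs0 : 0 < s := Real.sqrt_pos.2 hK0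
  have hs1 : s < 1/2 := by
    have h4 : Real.sqrt (1/4) = 1/2 := by
      rw [show (1/4:ℝ) = (1/2)^2 by norm_num, Real.sqrt_sq (by norm_num)]
    calc s < Real.sqrt (1/4) := Real.sqrt_lt_sqrt hK0.le hK4
    _ = 1/2 := h4
  have hsK : s^2 = K := Real.sq_sqrt hK0.le
  constructor
  · intro g hgm hg01 hgK
    set c : ℝ := Lfn s / (4*s) with hcdef
    set C : ℝ := I0 (1/2 + s) with hCdef
    have hpt : ∀ x y, C - c*K + c * (g x y - 1/2)^2 ≤ I0 (g x y) := by
      intro x y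
      have := I0_key hs0 hs1 (hg01 x y)
      rw [hsK] at this
      rw [← hcdef, ← hCdef] at this
      linarith
    have hgx : ∀ x, Measurable fun y => g x y := fun x => hgm.comp measurable_prodMk_left
    have hi1 : ∀ x, IntervalIntegrable (fun y => I0 (g x y)) volume 0 1 := fun x =>
      intervalIntegrable_of_bdd (continuous_I0.measurable.comp (hgx x))
        (fun y => abs_I0_le (hg01 x y))
    have hi2 : ∀ x, IntervalIntegrable (fun y => (g x y - 1/2)^2) volume 0 1 := fun x =>
      intervalIntegrable_of_bdd (((hgx x).sub measurable_const).pow measurable_const)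
        (fun y => by
          have h := hg01 x y
          rw [abs_le]; constructor <;> nlinarith [h.1, h.2])
    have hi3 : ∀ x, IntervalIntegrable (fun y => C - c*K + c * (g x y - 1/2)^2) volume 0 1 :=
      fun x => (_root_.intervalIntegrable_const).add ((hi2 x).const_mul c)
    set P : ℝ → ℝ := fun x => ∫ y in (0:ℝ)..1, (g x y - 1/2)^2 with hPdef
    set R : ℝ → ℝ := fun x => ∫ y in (0:ℝ)..1, I0 (g x y) with hRdef
    have hinner : ∀ x, C - c*K + c * P x ≤ R x := by
      intro x
      have heval : (∫ y in (0:ℝ)..1, (C - c*K + c * (g x y - 1/2)^2))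
          = C - c*K + c * P x := by
        rw [intervalIntegral.integral_add _root_.intervalIntegrable_const ((hi2 x).const_mul c),
          intervalIntegral.integral_const_mul, intervalIntegral.integral_const]
        simp [hPdef]
      have hmono := intervalIntegral.integral_mono_on zero_le_one (hi3 x) (hi1 x)
        (fun y _ => hpt x y)
      rw [heval] at hmono
      exact hmono
    have hPmeas : Measurable P :=
      measurable_param (f := fun q => (g q.1 q.2 - 1/2)^2)
        ((hgm.sub measurable_const).pow measurable_const)
    have hRmeas : Measurable R :=
      measurable_param (f := fun q => I0 (g q.1 q.2)) (continuous_I0.measurable.comp hgm)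
    have hPbd : ∀ x, |P x| ≤ 1 := by
      intro x
      have := intervalIntegral.norm_integral_le_of_norm_le_const
        (C := 1) (f := fun y => (g x y - 1/2)^2) (a := 0) (b := 1)
        (fun y _ => by
          have h := hg01 x y
          rw [Real.norm_eq_abs, abs_le]; constructor <;> nlinarith [h.1, h.2])
      have h2 : (1:ℝ) * |1 - 0| = 1 := by norm_num
      rw [Real.norm_eq_abs, h2] at this
      exact this
    have hRbd : ∀ x, |R x| ≤ 1 := by
      intro x
      have := intervalIntegral.norm_integral_le_of_norm_le_const
        (C := 1) (f := fun y => I0 (g x y)) (a := 0) (b := 1)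
        (fun y _ => by rw [Real.norm_eq_abs]; exact abs_I0_le (hg01 x y))
      have h2 : (1:ℝ) * |1 - 0| = 1 := by norm_num
      rw [Real.norm_eq_abs, h2] at this
      exact this
    have hPint : IntervalIntegrable P volume 0 1 := intervalIntegrable_of_bdd hPmeas hPbd
    have hRint : IntervalIntegrable R volume 0 1 := intervalIntegrable_of_bdd hRmeas hRbd
    have houter : (∫ x in (0:ℝ)..1, (C - c*K + c * P x)) ≤ ∫ x in (0:ℝ)..1, R x :=
      intervalIntegral.integral_mono_on zero_le_one
        ((_root_.intervalIntegrable_const).add (hPint.const_mul c)) hRint (fun x _ => hinner x)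
    have hPval : (∫ x in (0:ℝ)..1, P x) = K := hgK
    have heval2 : (∫ x in (0:ℝ)..1, (C - c*K + c * P x)) = C := by
      rw [intervalIntegral.integral_add _root_.intervalIntegrable_const (hPint.const_mul c),
        intervalIntegral.integral_const_mul, intervalIntegral.integral_const, hPval]
      simp
    rw [heval2] at houter
    exact houter
  · intro g hgm hg01 hgK habs
    have hpt : ∀ x y, I0 (g x y) = I0 (1/2 + s) := by
      intro x y
      rcases (abs_eq (Real.sqrt_nonneg K)).1 (habs x y) with h | h
      · rw [show g x y = 1/2 + s by rw [hsdef]; linarith]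
      · rw [show g x y = 1/2 - s by rw [hsdef]; linarith,
          show (1/2 : ℝ) - s = 1 - (1/2 + s) by ring, I0_symm]
    unfold rateFn
    simp_rw [hpt]
    simp
end

section
/- Suppose μ, ν : ℝ → ℝ are twice differentiable functions of c with μ(1/2) = 0, ν(1/2) = ν₀ ≠ 0, ε + ν₀ ≠ 0, and the quantity T(c) = ε³ + ν(c)³ + (3/2)(ε + ν(c))μ(c)² is constant. Then ν'(1/2) = 0 and ν''(1/2) = -((ε + ν₀)/ν₀²) μ'(1/2)². -/
/-- If μ(1/2) = 0, ν(1/2) = ν₀ ≠ 0, ε + ν₀ ≠ 0, and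
    T(c) = ε³ + ν(c)³ + (3/2)(ε+ν(c))μ(c)² is constant, then ν'(1/2) = 0 and
    ν''(1/2) = -((ε+ν₀)/ν₀²) μ'(1/2)². -/
theorem constraint_derivatives (ε ν₀ : ℝ) (μ ν : ℝ → ℝ)
    (hμ : ContDiff ℝ 2 μ) (hν : ContDiff ℝ 2 ν)
    (hμ0 : μ (1/2) = 0) (hν0 : ν (1/2) = ν₀) (hν₀ : ν₀ ≠ 0) (hεν : ε + ν₀ ≠ 0)
    (hconst : ∀ c : ℝ,
      ε ^ 3 + ν c ^ 3 + (3/2) * (ε + ν c) * μ c ^ 2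
        = ε ^ 3 + ν₀ ^ 3 + (3/2) * (ε + ν₀) * μ (1/2) ^ 2) :
    deriv ν (1/2) = 0 ∧
    deriv (deriv ν) (1/2) = -((ε + ν₀) / ν₀ ^ 2) * (deriv μ (1/2)) ^ 2 := by
  have hμd : Differentiable ℝ μ := hμ.differentiable (by norm_num)
  have hνd : Differentiable ℝ ν := hν.differentiable (by norm_num)
  have hμ' : ContDiff ℝ 1 (deriv μ) := (contDiff_succ_iff_deriv.mp (by exact_mod_cast hμ : ContDiff ℝ (1+1) μ)).2.2
  have hν' : ContDiff ℝ 1 (deriv ν) := (contDiff_succ_iff_deriv.mp (by exact_mod_cast hν : ContDiff ℝ (1+1) ν)).2.2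
  have hμ'd : Differentiable ℝ (deriv μ) := hμ'.differentiable (by norm_num)
  have hν'd : Differentiable ℝ (deriv ν) := hν'.differentiable (by norm_num)
  let G : ℝ → ℝ := fun c => 3 * ν c ^ 2 * deriv ν c
      + (3/2) * (deriv ν c * μ c ^ 2 + (ε + ν c) * (2 * μ c * deriv μ c))
  have hG0 : ∀ c, G c = 0 := by
    intro c
    have h1 : HasDerivAt (fun c => ε ^ 3 + ν c ^ 3 + (3/2) * (ε + ν c) * μ c ^ 2) (G c) c := by
      have hν1 := (hνd c).hasDerivAt
      have hμ1 := (hμd c).hasDerivAt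
      have := (hasDerivAt_const c (ε^3)).add (((hν1.pow 3).add
        ((((hasDerivAt_const c ε).add hν1).mul (hμ1.pow 2)).const_mul (3/2))))
      have hf : (fun c => ε ^ 3 + ν c ^ 3 + (3/2) * (ε + ν c) * μ c ^ 2)
          = fun x => ε ^ 3 + (ν x ^ 3 + (3/2) * ((ε + ν x) * μ x ^ 2)) := by
        funext x; ring
      rw [hf]
      refine this.congr_deriv ?_
      · show _ = (3 * ν c ^ 2 * deriv ν c
          + (3/2) * (deriv ν c * μ c ^ 2 + (ε + ν c) * (2 * μ c * deriv μ c)))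
        simp only [Pi.pow_apply, Pi.add_apply, Nat.add_one_sub_one, Nat.reduceSub, Nat.cast_ofNat]
        ring
    have h2 : HasDerivAt (fun c : ℝ => ε ^ 3 + ν c ^ 3 + (3/2) * (ε + ν c) * μ c ^ 2) 0 c := by
      have : (fun c : ℝ => ε ^ 3 + ν c ^ 3 + (3/2) * (ε + ν c) * μ c ^ 2)
          = fun _ => ε ^ 3 + ν₀ ^ 3 + (3/2) * (ε + ν₀) * μ (1/2) ^ 2 := funext hconst
      rw [this]; exact hasDerivAt_const c _
    exact h1.unique h2
  have hd1 : deriv ν (1/2) = 0 := by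
    have := hG0 (1/2)
    simp only [G, hμ0, hν0] at this
    have h3 : 3 * ν₀ ^ 2 * deriv ν (1/2) = 0 := by linarith [this]
    have h4 : 3 * ν₀ ^ 2 ≠ 0 := by positivity
    exact (mul_eq_zero.mp h3).resolve_left h4
  refine ⟨hd1, ?_⟩
  -- differentiate G at 1/2
  have hGzero : G = fun _ => (0:ℝ) := funext hG0
  have hGd : HasDerivAt G (3 * (2 * ν (1/2) * deriv ν (1/2)) * deriv ν (1/2)
      + 3 * ν (1/2) ^ 2 * deriv (deriv ν) (1/2)
      + (3/2) * (deriv (deriv ν) (1/2) * μ (1/2) ^ 2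
        + deriv ν (1/2) * (2 * μ (1/2) * deriv μ (1/2))
        + (deriv ν (1/2) * (2 * μ (1/2) * deriv μ (1/2))
          + (ε + ν (1/2)) * (2 * deriv μ (1/2) * deriv μ (1/2)
            + 2 * μ (1/2) * deriv (deriv μ) (1/2))))) (1/2) := by
    have hν1 := (hνd (1/2)).hasDerivAt
    have hμ1 := (hμd (1/2)).hasDerivAt
    have hν2 := (hν'd (1/2)).hasDerivAt
    have hμ2 := (hμ'd (1/2)).hasDerivAt
    have := (((hν1.pow 2).const_mul 3).mul hν2).add
      (((hν2.mul (hμ1.pow 2)).add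
        (((hasDerivAt_const _ ε).add hν1).mul
          (((hasDerivAt_const _ 2).mul hμ1).mul hμ2))).const_mul (3/2))
    refine this.congr_deriv ?_
    simp only [Pi.pow_apply, Pi.add_apply, Pi.mul_apply, Nat.add_one_sub_one, Nat.reduceSub, Nat.cast_ofNat]
    ring
  have hG0' : HasDerivAt G 0 (1/2) := by rw [hGzero]; exact hasDerivAt_const _ _
  have heq := hGd.unique hG0'
  rw [hμ0, hν0, hd1] at heq
  have hsq : ν₀ ^ 2 ≠ 0 := pow_ne_zero _ hν₀
  field_simp
  nlinarith [heq]
end
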